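/- (Approximate Caratheodory with high sampling ratio, l_infinity) Let x = sum_{j=1}^N lambda_j V_j in R^d with lambda >= 0, sum lambda_j = 1, and let eps > 0. Set R = max( max_j ||lambda_j V_j||_infty, max_j |lambda_j| ). Then there exists a subset J of {1,...,N} of size |J| = 1 + N * (2 log(4d) (sqrt(N) R / eps)^2) / (1 + 2 log(4d) (sqrt(N) R / eps)^2) and nonnegative coefficients mu_j for j in J such that || x - sum_{j in J} mu_j V_j ||_infty <= eps and | sum_{j in J} mu_j - 1 | <= eps. -/

import Mathlib

open Real Set


lemma hoeff_core (p h : ℝ) (hp0 : 0 ≤ p) (hp1 : p ≤ 1) (hh : 0 ≤ h) :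
    (1 - p) * exp (-(p * h)) + p * exp ((1 - p) * h) ≤ exp (h ^ 2 / 8) := by
  set D : ℝ → ℝ := fun x => 1 - p + p * exp x with hD
  have hDpos : ∀ x : ℝ, 0 ≤ x → 1 ≤ D x := by
    intro x hx
    have h1 : 1 ≤ exp x := one_le_exp hx
    have := mul_le_mul_of_nonneg_left h1 hp0
    simp only [hD, mul_one] at this ⊢
    linarith
  set g : ℝ → ℝ := fun x => p * exp x / D x - p - x / 4 with hg
  set f : ℝ → ℝ := fun x => log (D x) - p * x - x ^ 2 / 8 with hf
  have hDd : ∀ x : ℝ, HasDerivAt D (p * exp x) x := by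
    intro x
    exact ((hasDerivAt_exp x).const_mul p).const_add (1 - p)
  have hDcont : ContinuousOn D (Ici 0) :=
    (continuous_const.add (continuous_const.mul continuous_exp)).continuousOn
  have hDne : ∀ x ∈ Ici (0:ℝ), D x ≠ 0 := fun x hx => by have := hDpos x hx; linarith
  have hgd : ∀ x : ℝ, 0 < x → HasDerivAt g
      ((p * exp x * D x - p * exp x * (p * exp x)) / (D x) ^ 2 - 1 / 4) x := by
    intro x hx
    have hDne : D x ≠ 0 := by have := hDpos x hx.le; linarith
    have h1 : HasDerivAt (fun y => p * exp y) (p * exp x) x := (hasDerivAt_exp x).const_mul p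
    have h2 := (h1.div (hDd x) hDne)
    have h3 : HasDerivAt (fun y : ℝ => y / 4) (1 / 4) x := by
      simpa using (hasDerivAt_id x).div_const 4
    exact (h2.sub_const p).sub h3
  have hfd : ∀ x : ℝ, 0 < x → HasDerivAt f (g x) x := by
    intro x hx
    have hDne : D x ≠ 0 := by have := hDpos x hx.le; linarith
    have h1 : HasDerivAt (fun y => log (D y)) (p * exp x / D x) x := by
      simpa using (hDd x).log hDne
    have h2 : HasDerivAt (fun y : ℝ => p * y) p x := by
      simpa using (hasDerivAt_id x).const_mul p
    have h3 : HasDerivAt (fun y : ℝ => y ^ 2 / 8) (x / 4) x := by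
      have := ((hasDerivAt_pow 2 x).div_const 8)
      simpa using this.congr_deriv (by ring)
    exact (h1.sub h2).sub h3
  -- g is antitone on Ici 0
  have hgcont : ContinuousOn g (Ici 0) := by
    refine ContinuousOn.sub (ContinuousOn.sub ?_ continuousOn_const) ?_
    · exact (continuous_const.mul continuous_exp).continuousOn.div hDcont hDne
    · exact (continuous_id.div_const 4).continuousOn
  have hganti : AntitoneOn g (Ici 0) := by
    refine antitoneOn_of_deriv_nonpos (convex_Ici 0) hgcont ?_ ?_
    · intro x hx
      rw [interior_Ici] at hx
      exact ((hgd x hx).differentiableAt).differentiableWithinAt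
    · intro x hx
      rw [interior_Ici] at hx
      rw [(hgd x hx).deriv]
      have hD2 : (0:ℝ) < (D x) ^ 2 := by
        have := hDpos x hx.le; positivity
      rw [sub_nonpos, div_le_iff₀ hD2]
      have hDx : D x = 1 - p + p * exp x := rfl
      rw [hDx]
      nlinarith [sq_nonneg (1 - p - p * exp x)]
  have hg0 : g 0 = 0 := by
    simp [hg, hD]
  have hgle : ∀ x : ℝ, 0 ≤ x → g x ≤ 0 := by
    intro x hx
    have := hganti (self_mem_Ici) hx hx
    rwa [hg0] at this
  -- f is antitone on Ici 0
  have hfcont : ContinuousOn f (Ici 0) := by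
    refine ContinuousOn.sub (ContinuousOn.sub ?_ ?_) ?_
    · exact hDcont.log hDne
    · exact (continuous_const.mul continuous_id).continuousOn
    · exact ((continuous_pow 2).div_const 8).continuousOn
  have hfanti : AntitoneOn f (Ici 0) := by
    refine antitoneOn_of_deriv_nonpos (convex_Ici 0) hfcont ?_ ?_
    · intro x hx
      rw [interior_Ici] at hx
      exact ((hfd x hx).differentiableAt).differentiableWithinAt
    · intro x hx
      rw [interior_Ici] at hx
      rw [(hfd x hx).deriv]
      exact hgle x hx.le
  have hf0 : f 0 = 0 := by simp [hf, hD]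
  have hfle : f h ≤ 0 := by
    have := hfanti (self_mem_Ici) hh hh
    rwa [hf0] at this
  -- conclude
  have hDh : 0 < D h := lt_of_lt_of_le one_pos (hDpos h hh)
  have e1 : exp ((1 - p) * h) = exp h * exp (-(p * h)) := by
    rw [← exp_add]; ring_nf
  have key : (1 - p) * exp (-(p * h)) + p * exp ((1 - p) * h) = exp (log (D h) - p * h) := by
    rw [exp_sub, exp_log hDh, div_eq_mul_inv, ← exp_neg, e1]
    have hDx : D h = 1 - p + p * exp h := rfl
    rw [hDx]; ring
  rw [key]
  have hfle' : log (D h) - p * h - h ^ 2 / 8 ≤ 0 := hfle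
  exact exp_le_exp.2 (by linarith)


lemma hoeff_finset {ι : Type*} (s : Finset ι) (hs : s.Nonempty) (w : ι → ℝ) (a b : ℝ)
    (hw : ∀ u ∈ s, w u ∈ Set.Icc a b) (h0 : ∑ u ∈ s, w u = 0) :
    ∑ u ∈ s, exp (w u) ≤ s.card * exp ((b - a) ^ 2 / 8) := by
  obtain ⟨u0, hu0⟩ := hs
  have hcard : 0 < s.card := Finset.card_pos.2 ⟨u0, hu0⟩
  have hn : (0:ℝ) < s.card := by exact_mod_cast hcard
  have hab : a ≤ b := le_trans (hw u0 hu0).1 (hw u0 hu0).2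
  have ha0 : a ≤ 0 := by
    by_contra hcon
    push_neg at hcon
    have : (s.card : ℝ) * a ≤ ∑ u ∈ s, w u := by
      rw [← nsmul_eq_mul]
      exact Finset.card_nsmul_le_sum s w a (fun u hu => (hw u hu).1)
    rw [h0] at this
    nlinarith
  have hb0 : 0 ≤ b := by
    by_contra hcon
    push_neg at hcon
    have : ∑ u ∈ s, w u ≤ (s.card : ℝ) * b := by
      rw [← nsmul_eq_mul]
      exact Finset.sum_le_card_nsmul s w b (fun u hu => (hw u hu).2)
    rw [h0] at this
    nlinarith
  rcases eq_or_lt_of_le hab with heq | hlt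
  · -- a = b, so a = b = 0 and w ≡ 0 on s
    have ha : a = 0 := le_antisymm ha0 (heq ▸ hb0)
    have hw0 : ∀ u ∈ s, w u = 0 := fun u hu =>
      le_antisymm ((hw u hu).2.trans (by rw [← heq, ha])) (by rw [← ha]; exact (hw u hu).1)
    rw [Finset.sum_congr rfl (fun u hu => by rw [hw0 u hu])]
    simp only [exp_zero, Finset.sum_const, nsmul_eq_mul, mul_one]
    have : (1:ℝ) ≤ exp ((b - a) ^ 2 / 8) := one_le_exp (by positivity)
    nlinarith
  · have hba : 0 < b - a := sub_pos.2 hlt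
    -- pointwise convexity bound
    have hpt : ∀ u ∈ s, exp (w u) ≤ ((b - w u) * exp a + (w u - a) * exp b) / (b - a) := by
      intro u hu
      obtain ⟨hwa, hwb⟩ := hw u hu
      have hcvx := convexOn_exp.2 (mem_univ a) (mem_univ b)
        (div_nonneg (by linarith : (0:ℝ) ≤ b - w u) hba.le)
        (div_nonneg (by linarith : (0:ℝ) ≤ w u - a) hba.le)
        (by field_simp; ring)
      simp only [smul_eq_mul] at hcvx
      have harg : (b - w u) / (b - a) * a + (w u - a) / (b - a) * b = w u := by
        field_simp
        ring
      rw [harg] at hcvx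
      calc exp (w u) ≤ (b - w u) / (b - a) * exp a + (w u - a) / (b - a) * exp b := hcvx
        _ = ((b - w u) * exp a + (w u - a) * exp b) / (b - a) := by ring
    have hsum : ∑ u ∈ s, exp (w u) ≤
        (s.card * (b * exp a - a * exp b)) / (b - a) := by
      calc ∑ u ∈ s, exp (w u)
          ≤ ∑ u ∈ s, ((b - w u) * exp a + (w u - a) * exp b) / (b - a) :=
            Finset.sum_le_sum hpt
        _ = ((s.card * b - ∑ u ∈ s, w u) * exp a + ((∑ u ∈ s, w u) - s.card * a) * exp b)
              / (b - a) := by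
            rw [← Finset.sum_div]
            congr 1
            rw [Finset.sum_add_distrib, ← Finset.sum_mul, ← Finset.sum_mul]
            simp [Finset.sum_sub_distrib, mul_comm]
        _ = (s.card * (b * exp a - a * exp b)) / (b - a) := by rw [h0]; ring_nf
    -- apply hoeff_core with p = -a/(b-a), h = b-a
    set p := -a / (b - a) with hp
    have hp0 : 0 ≤ p := div_nonneg (by linarith) hba.le
    have hp1 : p ≤ 1 := by
      rw [hp, div_le_one hba]
      linarith
    have hcore := hoeff_core p (b - a) hp0 hp1 hba.le
    have he1 : -(p * (b - a)) = a := by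
      rw [hp]; field_simp
    have he2 : (1 - p) * (b - a) = b := by
      rw [hp]; field_simp; ring
    have he3 : (1 - p) = b / (b - a) := by
      rw [hp]; field_simp; ring
    rw [he1, he2] at hcore
    -- hcore : (1 - p) * exp a + p * exp b ≤ exp ((b-a)^2/8)
    have hval : (b * exp a - a * exp b) / (b - a) = (1 - p) * exp a + p * exp b := by
      rw [he3, hp]; ring
    calc ∑ u ∈ s, exp (w u) ≤ (s.card * (b * exp a - a * exp b)) / (b - a) := hsum
      _ = s.card * ((b * exp a - a * exp b) / (b - a)) := by ring
      _ = s.card * ((1 - p) * exp a + p * exp b) := by rw [hval]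
      _ ≤ s.card * exp ((b - a) ^ 2 / 8) := by
        apply mul_le_mul_of_nonneg_left hcore hn.le


lemma powersetCard_succ_sum {ι : Type*} [DecidableEq ι] (s : Finset ι) (k : ℕ)
    (F : Finset ι → ℝ) :
    ((k : ℝ) + 1) * ∑ T ∈ s.powersetCard (k + 1), F T
      = ∑ u ∈ s, ∑ T ∈ (s.erase u).powersetCard k, F (insert u T) := by
  have step1 : ((k : ℝ) + 1) * ∑ T ∈ s.powersetCard (k + 1), F T
      = ∑ T ∈ s.powersetCard (k + 1), ∑ u ∈ T, F T := by
    rw [Finset.mul_sum]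
    refine Finset.sum_congr rfl (fun T hT => ?_)
    have hc : T.card = k + 1 := (Finset.mem_powersetCard.1 hT).2
    rw [Finset.sum_const, hc, nsmul_eq_mul]
    push_cast
    ring
  have step2 : ∑ T ∈ s.powersetCard (k + 1), ∑ u ∈ T, F T
      = ∑ u ∈ s, ∑ T ∈ (s.powersetCard (k + 1)).filter (fun T => u ∈ T), F T := by
    apply Finset.sum_comm'
    intro T u
    constructor
    · rintro ⟨hT, hu2⟩
      exact ⟨Finset.mem_filter.2 ⟨hT, hu2⟩, (Finset.mem_powersetCard.1 hT).1 hu2⟩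
    · rintro ⟨hT, _⟩
      exact ⟨(Finset.mem_filter.1 hT).1, (Finset.mem_filter.1 hT).2⟩
  have step3 : ∀ u ∈ s, ∑ T ∈ (s.powersetCard (k + 1)).filter (fun T => u ∈ T), F T
      = ∑ T ∈ (s.erase u).powersetCard k, F (insert u T) := by
    intro u hu
    apply Finset.sum_nbij' (fun T => T.erase u) (fun T => insert u T)
    · intro T hT
      simp only [Finset.mem_filter, Finset.mem_powersetCard] at hT
      obtain ⟨⟨hsub, hcard⟩, huT⟩ := hT
      rw [Finset.mem_powersetCard]
      constructor
      · exact fun x hx => Finset.mem_erase.2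
          ⟨(Finset.mem_erase.1 hx).1, hsub (Finset.mem_erase.1 hx).2⟩
      · rw [Finset.card_erase_of_mem huT, hcard]
        omega
    · intro T hT
      rw [Finset.mem_powersetCard] at hT
      obtain ⟨hsub, hcard⟩ := hT
      have huT : u ∉ T := fun h => (Finset.mem_erase.1 (hsub h)).1 rfl
      simp only [Finset.mem_filter, Finset.mem_powersetCard]
      refine ⟨⟨?_, ?_⟩, Finset.mem_insert_self u T⟩
      · intro x hx
        rcases Finset.mem_insert.1 hx with rfl | hx
        · exact hu
        · exact (Finset.mem_erase.1 (hsub hx)).2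
      · rw [Finset.card_insert_of_notMem huT, hcard]
    · intro T hT
      simp only [Finset.mem_filter] at hT
      exact Finset.insert_erase hT.2
    · intro T hT
      rw [Finset.mem_powersetCard] at hT
      have huT : u ∉ T := fun h => (Finset.mem_erase.1 (hT.1 h)).1 rfl
      exact Finset.erase_insert huT
    · intro T hT
      simp only [Finset.mem_filter] at hT
      rw [Finset.insert_erase hT.2]
  rw [step1, step2]
  exact Finset.sum_congr rfl step3


lemma sampling_mgf {ι : Type*} [DecidableEq ι] (a b : ℝ) (c : ι → ℝ) (θ : ℝ) :
    ∀ (k : ℕ) (s : Finset ι), k < s.card → (∀ u ∈ s, c u ∈ Set.Icc a b) →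
    ∑ T ∈ s.powersetCard k,
        exp (θ * ((∑ j ∈ T, c j) - k * ((∑ j ∈ s, c j) / s.card)) / (s.card - k))
      ≤ (s.card.choose k : ℝ) *
        exp (θ ^ 2 * (b - a) ^ 2 / 8 * ∑ j ∈ Finset.range k, (((s.card : ℝ) - 1 - j)⁻¹) ^ 2) := by
  intro k
  induction k with
  | zero =>
    intro s hk hc
    simp
  | succ k ih =>
    intro s hk hc
    set n : ℝ := (s.card : ℝ) with hn
    have hn2 : (k : ℝ) + 2 ≤ n := by
      rw [hn]; exact_mod_cast hk
    have hnpos : (0:ℝ) < n := by have : (0:ℝ) ≤ k := Nat.cast_nonneg k; linarith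
    have hn1pos : (0:ℝ) < n - 1 := by have : (0:ℝ) ≤ k := Nat.cast_nonneg k; linarith
    have hn1kpos : (0:ℝ) < n - 1 - k := by linarith
    have hcard1 : 1 ≤ s.card := by
      by_contra hcon
      push_neg at hcon
      interval_cases h : s.card <;> omega
    set μ : ℝ := (∑ j ∈ s, c j) / n with hμ
    set w : ι → ℝ := fun u => θ * (c u - μ) / (n - 1) with hw
    set F : Finset ι → ℝ := fun T =>
      exp (θ * ((∑ j ∈ T, c j) - (k + 1 : ℕ) * μ) / (n - (k + 1 : ℕ))) with hF
    -- the double counting identity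
    have hdc := powersetCard_succ_sum s k F
    -- bound each inner sum via IH
    have hinner : ∀ u ∈ s, ∑ T ∈ (s.erase u).powersetCard k, F (insert u T)
        ≤ exp (w u) * ((s.card - 1).choose k : ℝ) *
          exp (θ ^ 2 * (b - a) ^ 2 / 8 * ∑ j ∈ Finset.range k, ((n - 1 - 1 - j)⁻¹) ^ 2) := by
      intro u hu
      have hecard : (s.erase u).card = s.card - 1 := Finset.card_erase_of_mem hu
      have hecast : ((s.erase u).card : ℝ) = n - 1 := by
        rw [hecard, hn]
        push_cast [hcard1]
        ring
      have hesum : ∑ j ∈ s.erase u, c j = (∑ j ∈ s, c j) - c u :=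
        Finset.sum_erase_eq_sub hu
      have hklt : k < (s.erase u).card := by
        rw [hecard]; omega
      have hceb : ∀ v ∈ s.erase u, c v ∈ Set.Icc a b :=
        fun v hv => hc v (Finset.mem_of_mem_erase hv)
      have hIH := ih (s.erase u) hklt hceb
      rw [hecast, hesum, hecard] at hIH
      -- rewrite F (insert u T) = exp (w u) * inner term
      have hrw : ∀ T ∈ (s.erase u).powersetCard k, F (insert u T)
          = exp (w u) *
            exp (θ * ((∑ j ∈ T, c j) - k * (((∑ j ∈ s, c j) - c u) / (n - 1))) / (n - 1 - k)) := by
        intro T hT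
        have hTsub := (Finset.mem_powersetCard.1 hT).1
        have huT : u ∉ T := fun h => (Finset.mem_erase.1 (hTsub h)).1 rfl
        have hins : ∑ j ∈ insert u T, c j = c u + ∑ j ∈ T, c j :=
          Finset.sum_insert huT
        rw [hF]
        simp only
        rw [hins, ← exp_add]
        congr 1
        rw [hw, hμ]
        have hne1 : n ≠ 0 := ne_of_gt hnpos
        have hne2 : n - 1 ≠ 0 := ne_of_gt hn1pos
        have hne3 : n - 1 - k ≠ 0 := ne_of_gt hn1kpos
        have hcast : ((k + 1 : ℕ) : ℝ) = (k : ℝ) + 1 := by push_cast; ring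
        rw [hcast]
        have hne4 : n - ((k:ℝ) + 1) ≠ 0 := by
          intro h; apply hne3; linarith [h]
        field_simp
        ring
      rw [Finset.sum_congr rfl hrw, ← Finset.mul_sum]
      have := mul_le_mul_of_nonneg_left hIH (exp_nonneg (w u))
      calc exp (w u) * ∑ T ∈ (s.erase u).powersetCard k,
            exp (θ * ((∑ j ∈ T, c j) - k * (((∑ j ∈ s, c j) - c u) / (n - 1))) / (n - 1 - k))
          ≤ exp (w u) * (((s.card - 1).choose k : ℝ) *
            exp (θ ^ 2 * (b - a) ^ 2 / 8 * ∑ j ∈ Finset.range k, ((n - 1 - 1 - j)⁻¹) ^ 2)) := this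
        _ = exp (w u) * ((s.card - 1).choose k : ℝ) *
            exp (θ ^ 2 * (b - a) ^ 2 / 8 * ∑ j ∈ Finset.range k, ((n - 1 - 1 - j)⁻¹) ^ 2) := by
            ring
    -- Hoeffding bound on the pick of u
    have hs : s.Nonempty := Finset.card_pos.1 (by omega)
    set t0 : ℝ := θ / (n - 1) with ht0
    have hwt : ∀ x : ℝ, θ * x / (n - 1) = t0 * x := fun x => by rw [ht0]; ring
    set A : ℝ := min (t0 * (a - μ)) (t0 * (b - μ)) with hA
    set B : ℝ := max (t0 * (a - μ)) (t0 * (b - μ)) with hB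
    have hwmem : ∀ u ∈ s, w u ∈ Set.Icc A B := by
      intro u hu
      have hcu := hc u hu
      have hw1 : w u = t0 * (c u - μ) := by rw [hw]; exact hwt _
      rcases le_total 0 t0 with ht | ht
      · constructor
        · exact le_trans (min_le_left _ _)
            (by rw [hw1]; exact mul_le_mul_of_nonneg_left (by linarith [hcu.1]) ht)
        · exact le_trans
            (by rw [hw1]; exact mul_le_mul_of_nonneg_left (by linarith [hcu.2]) ht)
            (le_max_right _ _)
      · constructor
        · exact le_trans (min_le_right _ _)
            (by rw [hw1]; exact mul_le_mul_of_nonpos_left (by linarith [hcu.2]) ht)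
        · exact le_trans
            (by rw [hw1]; exact mul_le_mul_of_nonpos_left (by linarith [hcu.1]) ht)
            (le_max_left _ _)
    have hsum0 : ∑ u ∈ s, (c u - μ) = 0 := by
      rw [Finset.sum_sub_distrib, Finset.sum_const, nsmul_eq_mul, hμ]
      field_simp
      rw [← hn]; ring
    have hw0 : ∑ u ∈ s, w u = 0 := by
      have : ∑ u ∈ s, w u = t0 * ∑ u ∈ s, (c u - μ) := by
        rw [Finset.mul_sum]
        exact Finset.sum_congr rfl (fun u _ => by rw [hw]; exact hwt _)
      rw [this, hsum0, mul_zero]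
    have hBA : (B - A) ^ 2 / 8 = θ ^ 2 * (b - a) ^ 2 / 8 * ((n - 1)⁻¹) ^ 2 := by
      have h2 : (B - A) ^ 2 = (t0 * (b - a)) ^ 2 := by
        rw [hB, hA, max_sub_min_eq_abs, sq_abs]
        ring
      rw [h2, ht0]
      field_simp
    have hHoeff := hoeff_finset s hs w A B hwmem hw0
    rw [hBA] at hHoeff
    -- combine everything
    set C' : ℝ := ((s.card - 1).choose k : ℝ) with hC'
    set E' : ℝ := exp (θ ^ 2 * (b - a) ^ 2 / 8 *
      ∑ j ∈ Finset.range k, ((n - 1 - 1 - j)⁻¹) ^ 2) with hE'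
    have hCpos : 0 ≤ C' := by rw [hC']; positivity
    have hEpos : 0 ≤ E' := by rw [hE']; positivity
    have hstep : ((k : ℝ) + 1) * ∑ T ∈ s.powersetCard (k + 1), F T
        ≤ n * exp (θ ^ 2 * (b - a) ^ 2 / 8 * ((n - 1)⁻¹) ^ 2) * (C' * E') := by
      rw [hdc]
      calc ∑ u ∈ s, ∑ T ∈ (s.erase u).powersetCard k, F (insert u T)
          ≤ ∑ u ∈ s, exp (w u) * C' * E' := Finset.sum_le_sum hinner
        _ = (∑ u ∈ s, exp (w u)) * (C' * E') := by
            rw [Finset.sum_mul]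
            exact Finset.sum_congr rfl (fun u _ => by ring)
        _ ≤ (n * exp (θ ^ 2 * (b - a) ^ 2 / 8 * ((n - 1)⁻¹) ^ 2)) * (C' * E') := by
            apply mul_le_mul_of_nonneg_right hHoeff (mul_nonneg hCpos hEpos)
        _ = n * exp (θ ^ 2 * (b - a) ^ 2 / 8 * ((n - 1)⁻¹) ^ 2) * (C' * E') := by ring
    -- identify with the RHS
    have hchoose : n * C' = ((k : ℝ) + 1) * (s.card.choose (k + 1) : ℝ) := by
      have h := Nat.add_one_mul_choose_eq (s.card - 1) k
      have hsucc : s.card - 1 + 1 = s.card := by omega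
      rw [hsucc] at h
      have h2 : ((s.card : ℝ)) * (((s.card - 1).choose k : ℕ) : ℝ)
          = ((s.card.choose (k + 1) : ℕ) : ℝ) * ((k : ℝ) + 1) := by
        exact_mod_cast h
      rw [hn, hC']
      linarith [h2]
    have hSig : ∑ j ∈ Finset.range (k + 1), ((n - 1 - j)⁻¹) ^ 2
        = (∑ j ∈ Finset.range k, ((n - 1 - 1 - j)⁻¹) ^ 2) + ((n - 1)⁻¹) ^ 2 := by
      rw [Finset.sum_range_succ']
      congr 1
      · exact Finset.sum_congr rfl (fun j _ => by push_cast; ring_nf)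
      · norm_num
    have hexp : exp (θ ^ 2 * (b - a) ^ 2 / 8 * ((n - 1)⁻¹) ^ 2) * E'
        = exp (θ ^ 2 * (b - a) ^ 2 / 8 * ∑ j ∈ Finset.range (k + 1), ((n - 1 - j)⁻¹) ^ 2) := by
      rw [hE', ← exp_add, hSig]
      congr 1
      ring
    have hfinal : ((k : ℝ) + 1) * ∑ T ∈ s.powersetCard (k + 1), F T
        ≤ ((k : ℝ) + 1) * ((s.card.choose (k + 1) : ℝ) *
          exp (θ ^ 2 * (b - a) ^ 2 / 8 * ∑ j ∈ Finset.range (k + 1), ((n - 1 - j)⁻¹) ^ 2)) := by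
      calc ((k : ℝ) + 1) * ∑ T ∈ s.powersetCard (k + 1), F T
          ≤ n * exp (θ ^ 2 * (b - a) ^ 2 / 8 * ((n - 1)⁻¹) ^ 2) * (C' * E') := hstep
        _ = (n * C') * (exp (θ ^ 2 * (b - a) ^ 2 / 8 * ((n - 1)⁻¹) ^ 2) * E') := by ring
        _ = ((k : ℝ) + 1) * ((s.card.choose (k + 1) : ℝ) *
            exp (θ ^ 2 * (b - a) ^ 2 / 8 * ∑ j ∈ Finset.range (k + 1), ((n - 1 - j)⁻¹) ^ 2)) := by
            rw [hchoose, hexp]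
            ring
    have hk1 : (0:ℝ) < (k : ℝ) + 1 := by positivity
    exact le_of_mul_le_mul_left hfinal hk1


lemma sig_le (N m : ℕ) (hm : 1 ≤ m) (hmN : m < N) :
    ∑ j ∈ Finset.range m, (((N : ℝ) - 1 - j)⁻¹) ^ 2
      ≤ m / ((((N : ℝ) - m) - 1/2) * ((N : ℝ) - 1/2)) := by
  set g : ℕ → ℝ := fun j => 1 / ((N : ℝ) - j - 1/2) with hg
  have hterm : ∀ j ∈ Finset.range m, (((N : ℝ) - 1 - j)⁻¹) ^ 2 ≤ g (j + 1) - g j := by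
    intro j hj
    have hjm : j < m := Finset.mem_range.1 hj
    have hx : (1:ℝ) ≤ (N : ℝ) - 1 - j := by
      have h1 : (j : ℝ) + 1 ≤ (m : ℝ) := by exact_mod_cast hjm
      have h2 : (m : ℝ) + 1 ≤ (N : ℝ) := by exact_mod_cast hmN
      linarith
    set x : ℝ := (N : ℝ) - 1 - j with hxd
    have hx2 : (0:ℝ) < x ^ 2 - 1/4 := by nlinarith
    have hgj1 : g (j + 1) = 1 / (x - 1/2) := by
      rw [hg, hxd]; push_cast; ring_nf
    have hgj : g j = 1 / (x + 1/2) := by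
      rw [hg, hxd]; push_cast; ring_nf
    have h1 : x - 1/2 ≠ 0 := by nlinarith
    have h2 : x + 1/2 ≠ 0 := by nlinarith
    have hdiff : g (j + 1) - g j = 1 / (x ^ 2 - 1/4) := by
      rw [hgj1, hgj, div_sub_div _ _ h1 h2,
        show (1 * (x + 1/2) - (x - 1/2) * 1) = (1:ℝ) by ring,
        show (x - 1/2) * (x + 1/2) = x ^ 2 - 1/4 by ring]
    rw [hdiff]
    have hxx : (0:ℝ) < x ^ 2 := by nlinarith
    rw [inv_pow, inv_eq_one_div]
    apply div_le_div_of_nonneg_left one_pos.le hx2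
    nlinarith
  calc ∑ j ∈ Finset.range m, (((N : ℝ) - 1 - j)⁻¹) ^ 2
      ≤ ∑ j ∈ Finset.range m, (g (j + 1) - g j) := Finset.sum_le_sum hterm
    _ = g m - g 0 := Finset.sum_range_sub g m
    _ = m / ((((N : ℝ) - m) - 1/2) * ((N : ℝ) - 1/2)) := by
        have h1 : (N : ℝ) - m - 1/2 ≠ 0 := by
          have : (m : ℝ) + 1 ≤ (N : ℝ) := by exact_mod_cast hmN
          nlinarith
        have h2 : (N : ℝ) - 1/2 ≠ 0 := by
          have : (1 : ℝ) ≤ (N : ℝ) := by exact_mod_cast hmN.le.trans' hm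
          nlinarith
        have e0 : g 0 = 1 / ((N : ℝ) - 1/2) := by rw [hg]; norm_num
        have em : g m = 1 / ((N : ℝ) - m - 1/2) := by rw [hg]
        rw [em, e0, div_sub_div _ _ h1 h2,
          show (1 * ((N:ℝ) - 1/2) - ((N:ℝ) - m - 1/2) * 1) = (m:ℝ) by ring]

lemma tail_bound {ι : Type*} [DecidableEq ι] (s : Finset ι) (c : ι → ℝ) (a b : ℝ) (m : ℕ)
    (hm : m < s.card) (hc : ∀ u ∈ s, c u ∈ Set.Icc a b) (hab : a < b) (hm1 : 1 ≤ m)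
    (s0 : ℝ) (hs0 : 0 < s0) :
    (((s.powersetCard m).filter
        (fun T => s0 ≤ (∑ j ∈ T, c j) - m * ((∑ j ∈ s, c j) / s.card))).card : ℝ)
      ≤ (s.card.choose m : ℝ) *
        exp (-(2 * s0 ^ 2 / (((s.card : ℝ) - m) ^ 2 * (b - a) ^ 2 *
          ∑ j ∈ Finset.range m, (((s.card : ℝ) - 1 - j)⁻¹) ^ 2))) := by
  set n : ℝ := (s.card : ℝ) with hn
  set Sg : ℝ := ∑ j ∈ Finset.range m, ((n - 1 - j)⁻¹) ^ 2 with hSg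
  have hq : (0:ℝ) < n - m := by
    rw [hn]; have : (m:ℝ) + 1 ≤ (s.card : ℝ) := by exact_mod_cast hm
    linarith
  have hSgpos : 0 < Sg := by
    rw [hSg]
    apply Finset.sum_pos
    · intro j hj
      have hjm : j < m := Finset.mem_range.1 hj
      have : (0:ℝ) < n - 1 - j := by
        have h1 : (j:ℝ) + 1 ≤ (m:ℝ) := by exact_mod_cast hjm
        linarith
      positivity
    · exact ⟨0, Finset.mem_range.2 hm1⟩
  have hba : (0:ℝ) < b - a := sub_pos.2 hab
  set K : ℝ := (b - a) ^ 2 * Sg / 8 with hK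
  have hKpos : 0 < K := by rw [hK]; positivity
  set θ : ℝ := s0 / (2 * K * (n - m)) with hθ
  have hθpos : 0 < θ := by rw [hθ]; positivity
  have hmgf := sampling_mgf a b c θ m s hm hc
  -- pointwise lower bound on the filtered sum
  set P := s.powersetCard m with hP
  set Pf := P.filter (fun T => s0 ≤ (∑ j ∈ T, c j) - m * ((∑ j ∈ s, c j) / s.card)) with hPf
  have hlow : (Pf.card : ℝ) * exp (θ * s0 / (n - m))
      ≤ ∑ T ∈ P, exp (θ * ((∑ j ∈ T, c j) - m * ((∑ j ∈ s, c j) / s.card)) / (n - m)) := by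
    calc (Pf.card : ℝ) * exp (θ * s0 / (n - m))
        = ∑ _T ∈ Pf, exp (θ * s0 / (n - m)) := by
          rw [Finset.sum_const, nsmul_eq_mul]
      _ ≤ ∑ T ∈ Pf, exp (θ * ((∑ j ∈ T, c j) - m * ((∑ j ∈ s, c j) / s.card)) / (n - m)) := by
          apply Finset.sum_le_sum
          intro T hT
          have hDT := (Finset.mem_filter.1 hT).2
          have hθ0 : 0 ≤ θ := hθpos.le
          gcongr
      _ ≤ ∑ T ∈ P, exp (θ * ((∑ j ∈ T, c j) - m * ((∑ j ∈ s, c j) / s.card)) / (n - m)) := by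
          apply Finset.sum_le_sum_of_subset_of_nonneg (Finset.filter_subset _ _)
          intro T _ _
          positivity
  -- combine with the mgf bound
  have hcount : (Pf.card : ℝ) ≤ (s.card.choose m : ℝ) * exp (θ ^ 2 * K - θ * s0 / (n - m)) := by
    have h1 : (Pf.card : ℝ) * exp (θ * s0 / (n - m))
        ≤ (s.card.choose m : ℝ) * exp (θ ^ 2 * K) := by
      apply hlow.trans
      have : θ ^ 2 * (b - a) ^ 2 / 8 * Sg = θ ^ 2 * K := by rw [hK]; ring
      rw [← this]
      exact hmgf
    have h2 : (Pf.card : ℝ) ≤ (s.card.choose m : ℝ) * exp (θ ^ 2 * K) / exp (θ * s0 / (n - m)) := by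
      rw [le_div_iff₀ (exp_pos _)]
      exact h1
    calc (Pf.card : ℝ) ≤ (s.card.choose m : ℝ) * exp (θ ^ 2 * K) / exp (θ * s0 / (n - m)) := h2
      _ = (s.card.choose m : ℝ) * exp (θ ^ 2 * K - θ * s0 / (n - m)) := by
          rw [exp_sub]; ring
  have hexp : θ ^ 2 * K - θ * s0 / (n - m) = -(2 * s0 ^ 2 / ((n - m) ^ 2 * (b - a) ^ 2 * Sg)) := by
    rw [hθ, hK]
    have h1 : (n - m) ≠ 0 := ne_of_gt hq
    have h2 : (b - a) ≠ 0 := ne_of_gt hba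
    have h3 : Sg ≠ 0 := ne_of_gt hSgpos
    field_simp
    ring
  rw [hexp] at hcount
  exact hcount


lemma tail_bound_univ {N : ℕ} (c : Fin N → ℝ) (a b : ℝ) (m : ℕ)
    (hm : m < N) (hc : ∀ u, c u ∈ Set.Icc a b) (hab : a < b) (hm1 : 1 ≤ m)
    (s0 : ℝ) (hs0 : 0 < s0) :
    ((((Finset.univ : Finset (Fin N)).powersetCard m).filter
        (fun T => s0 ≤ (∑ j ∈ T, c j) - m * ((∑ j, c j) / N))).card : ℝ)
      ≤ (N.choose m : ℝ) *
        exp (-(2 * s0 ^ 2 / (((N : ℝ) - m) ^ 2 * (b - a) ^ 2 *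
          ∑ j ∈ Finset.range m, (((N : ℝ) - 1 - j)⁻¹) ^ 2))) := by
  have h := tail_bound (Finset.univ : Finset (Fin N)) c a b m
    (by simpa [Finset.card_univ] using hm) (fun u _ => hc u) hab hm1 s0 hs0
  simpa [Finset.card_univ] using h

set_option maxHeartbeats 2000000 in
lemma caseB2 (d N m q : ℕ) (V : Fin N → Fin d → ℝ) (lam : Fin N → ℝ)
    (hlam : ∀ j, 0 ≤ lam j) (hsum : ∑ j, lam j = 1)
    (x : Fin d → ℝ) (hx : x = ∑ j, lam j • V j)
    (ε R L : ℝ) (hε : 0 < ε) (hR : 0 < R)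
    (hRv : ∀ j, ‖lam j • V j‖ ≤ R) (hRl : ∀ j, |lam j| ≤ R)
    (hdr : (1:ℝ) ≤ d) (hL : L = log (4 * d)) (hL1 : (1.386:ℝ) < L)
    (hm1 : 1 ≤ m) (hmN : m < N) (hqcast : (q:ℝ) = (N:ℝ) - m)
    (hq2L : 2 * L < (q:ℝ)) (hN8L : 8 * L < (N:ℝ))
    (hkey : (L - 5/16) * (2 * (N:ℝ)^2 * (q:ℝ)^2 * R^2 *
        (∑ j ∈ Finset.range m, (((N : ℝ) - 1 - j)⁻¹) ^ 2)) < (m:ℝ)^2 * ε^2) :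
    ∃ (J : Finset (Fin N)) (μ : Fin N → ℝ),
      J.card = m ∧ (∀ j, 0 ≤ μ j) ∧
      ‖x - ∑ j ∈ J, μ j • V j‖ ≤ ε ∧ |(∑ j ∈ J, μ j) - 1| ≤ ε := by
  have hNr : (1:ℝ) ≤ (N:ℝ) := by
    have : 1 ≤ N := hm1.trans hmN.le
    exact_mod_cast this
  have hNpos : (0:ℝ) < (N:ℝ) := by linarith
  have hmpos : (0:ℝ) < (m:ℝ) := by exact_mod_cast hm1
  have hqpos : (0:ℝ) < (q:ℝ) := by nlinarith
  have hLpos : (0:ℝ) < L := by linarith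
  have hdpos : (0:ℝ) < (d:ℝ) := by linarith
  set s0 : ℝ := (m:ℝ) * ε / (N:ℝ) with hs0def
  have hs0 : 0 < s0 := by rw [hs0def]; positivity
  set Sg : ℝ := ∑ j ∈ Finset.range m, (((N : ℝ) - 1 - j)⁻¹) ^ 2 with hSgdef
  have hSgpos : 0 < Sg := by
    rw [hSgdef]
    apply Finset.sum_pos
    · intro j hj
      have hjm : j < m := Finset.mem_range.1 hj
      have h1 : (j:ℝ) + 1 ≤ (m:ℝ) := by exact_mod_cast hjm
      have h2 : (m:ℝ) + 1 ≤ (N:ℝ) := by exact_mod_cast hmN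
      have : (0:ℝ) < (N:ℝ) - 1 - j := by linarith
      positivity
    · exact ⟨0, Finset.mem_range.2 hm1⟩
  -- the three exponent values
  have hEV : L - 5/16 < 2 * s0 ^ 2 / (((N : ℝ) - m) ^ 2 * (R - -R) ^ 2 * Sg) := by
    have hDen : (0:ℝ) < 2 * (N:ℝ)^2 * (q:ℝ)^2 * R^2 * Sg := by positivity
    have h1 : L - 5/16 < (m:ℝ)^2 * ε^2 / (2 * (N:ℝ)^2 * (q:ℝ)^2 * R^2 * Sg) :=
      (lt_div_iff₀ hDen).2 hkey
    have h2 : 2 * s0 ^ 2 / (((N : ℝ) - m) ^ 2 * (R - -R) ^ 2 * Sg)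
        = (m:ℝ)^2 * ε^2 / (2 * (N:ℝ)^2 * (q:ℝ)^2 * R^2 * Sg) := by
      rw [hs0def, ← hqcast]
      have hNne : (N:ℝ) ≠ 0 := ne_of_gt hNpos
      have hqne : (q:ℝ) ≠ 0 := ne_of_gt hqpos
      have hRne : R ≠ 0 := ne_of_gt hR
      have hSgne : Sg ≠ 0 := ne_of_gt hSgpos
      field_simp
      ring
    rw [h2]
    exact h1
  have hEL : 4 * (L - 5/16) < 2 * s0 ^ 2 / (((N : ℝ) - m) ^ 2 * (R - 0) ^ 2 * Sg) := by
    have hDen : (0:ℝ) < 2 * (N:ℝ)^2 * (q:ℝ)^2 * R^2 * Sg := by positivity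
    have h1 : L - 5/16 < (m:ℝ)^2 * ε^2 / (2 * (N:ℝ)^2 * (q:ℝ)^2 * R^2 * Sg) :=
      (lt_div_iff₀ hDen).2 hkey
    have h2 : 2 * s0 ^ 2 / (((N : ℝ) - m) ^ 2 * (R - 0) ^ 2 * Sg)
        = 4 * ((m:ℝ)^2 * ε^2 / (2 * (N:ℝ)^2 * (q:ℝ)^2 * R^2 * Sg)) := by
      rw [hs0def, ← hqcast]
      have hNne : (N:ℝ) ≠ 0 := ne_of_gt hNpos
      have hqne : (q:ℝ) ≠ 0 := ne_of_gt hqpos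
      have hRne : R ≠ 0 := ne_of_gt hR
      have hSgne : Sg ≠ 0 := ne_of_gt hSgpos
      field_simp
      ring
    rw [h2]
    linarith
  -- numeric bounds on exponentials
  have hxp516 : exp (5/16 : ℝ) ≤ 16/11 := by
    have h1 := Real.add_one_le_exp (-(5/16) : ℝ)
    have h2 : (11/16 : ℝ) ≤ exp (-(5/16)) := by linarith
    rw [show (5/16:ℝ) = -(-(5/16)) by ring, Real.exp_neg]
    calc (exp (-(5/16) : ℝ))⁻¹ ≤ (11/16 : ℝ)⁻¹ := by
          apply inv_anti₀ (by norm_num) h2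
      _ = 16/11 := by norm_num
  have hxp14 : exp (1/4 : ℝ) ≤ 4/3 := by
    have h1 := Real.add_one_le_exp (-(1/4) : ℝ)
    have h2 : (3/4 : ℝ) ≤ exp (-(1/4)) := by linarith
    rw [show (1/4:ℝ) = -(-(1/4)) by ring, Real.exp_neg]
    calc (exp (-(1/4) : ℝ))⁻¹ ≤ (3/4 : ℝ)⁻¹ := by
          apply inv_anti₀ (by norm_num) h2
      _ = 4/3 := by norm_num
  have hxp54 : exp (5/4 : ℝ) ≤ 1024/243 := by
    rw [show (5/4:ℝ) = ((5:ℕ):ℝ) * (1/4:ℝ) by norm_num, Real.exp_nat_mul]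
    calc exp (1/4:ℝ) ^ 5 ≤ (4/3:ℝ)^5 := pow_le_pow_left₀ (exp_pos _).le hxp14 5
      _ = 1024/243 := by norm_num
  have hexpL : exp (-L) = 1/(4 * (d:ℝ)) := by
    rw [hL, Real.exp_neg, Real.exp_log (by positivity)]
    norm_num
  -- exponential bounds e1, e2
  set e1 : ℝ := exp (-(2 * s0 ^ 2 / (((N : ℝ) - m) ^ 2 * (R - -R) ^ 2 * Sg))) with he1def
  set e2 : ℝ := exp (-(2 * s0 ^ 2 / (((N : ℝ) - m) ^ 2 * (R - 0) ^ 2 * Sg))) with he2def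
  have he1 : e1 ≤ (16/11) * (1/(4 * (d:ℝ))) := by
    rw [he1def]
    calc exp (-(2 * s0 ^ 2 / (((N : ℝ) - m) ^ 2 * (R - -R) ^ 2 * Sg)))
        ≤ exp (-(L - 5/16)) := exp_le_exp.2 (by linarith)
      _ = exp (5/16) * exp (-L) := by rw [← Real.exp_add]; ring_nf
      _ ≤ (16/11) * (1/(4 * (d:ℝ))) := by
          rw [hexpL]
          apply mul_le_mul_of_nonneg_right hxp516 (by positivity)
  have he2 : e2 ≤ (1024/243) * (1/(4 * (d:ℝ)))^4 := by
    rw [he2def]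
    calc exp (-(2 * s0 ^ 2 / (((N : ℝ) - m) ^ 2 * (R - 0) ^ 2 * Sg)))
        ≤ exp (-(4 * (L - 5/16))) := exp_le_exp.2 (by linarith)
      _ = exp (5/4) * exp (-L) ^ 4 := by
          rw [show -(4 * (L - 5/16)) = 5/4 + (((4:ℕ):ℝ) * (-L)) by push_cast; ring,
            Real.exp_add, Real.exp_nat_mul]
      _ ≤ (1024/243) * (1/(4 * (d:ℝ)))^4 := by
          rw [hexpL]
          apply mul_le_mul hxp54 (le_refl _) (by positivity) (by norm_num)
  have he1nn : 0 ≤ e1 := exp_nonneg _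
  have he2nn : 0 ≤ e2 := exp_nonneg _
  -- the union bound : 2d*e1 + 2*e2 < 1
  have hsmall : 2 * (d:ℝ) * e1 + 2 * e2 < 1 := by
    have hdne : (d:ℝ) ≠ 0 := ne_of_gt hdpos
    have h1 : 2 * (d:ℝ) * e1 ≤ 8/11 := by
      calc 2 * (d:ℝ) * e1 ≤ 2 * (d:ℝ) * ((16/11) * (1/(4 * (d:ℝ)))) := by
            apply mul_le_mul_of_nonneg_left he1 (by positivity)
        _ = 8/11 := by field_simp; ring
    have h2 : 2 * e2 ≤ 8/243 := by
      have h3 : (1/(4 * (d:ℝ)))^4 ≤ (1/4:ℝ)^4 := by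
        apply pow_le_pow_left₀ (by positivity)
        rw [div_le_div_iff₀ (by positivity) (by norm_num)]
        nlinarith
      calc 2 * e2 ≤ 2 * ((1024/243) * (1/(4 * (d:ℝ)))^4) := by linarith
        _ ≤ 2 * ((1024/243) * (1/4:ℝ)^4) := by nlinarith
        _ = 8/243 := by norm_num
    linarith
  -- set up the events
  set P : Finset (Finset (Fin N)) := (Finset.univ : Finset (Fin N)).powersetCard m with hPdef
  have hPcard : P.card = N.choose m := by
    rw [hPdef, Finset.card_powersetCard, Finset.card_univ, Fintype.card_fin]
  have hCpos : (0:ℝ) < (N.choose m : ℝ) := by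
    have := Nat.choose_pos hmN.le
    exact_mod_cast this
  -- coordinate bounds
  have hcmem : ∀ (i : Fin d) (j : Fin N), lam j * V j i ∈ Set.Icc (-R) R := by
    intro i j
    have h1 := norm_le_pi_norm (lam j • V j) i
    simp only [Pi.smul_apply, smul_eq_mul, Real.norm_eq_abs] at h1
    exact abs_le.1 (h1.trans (hRv j))
  have hcmem' : ∀ (i : Fin d) (j : Fin N), -(lam j * V j i) ∈ Set.Icc (-R) R := by
    intro i j
    have := hcmem i j
    constructor <;> [linarith [this.2]; linarith [this.1]]
  have hlmem : ∀ j, lam j ∈ Set.Icc (0:ℝ) R :=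
    fun j => ⟨hlam j, (le_abs_self _).trans (hRl j)⟩
  have hlmem' : ∀ j, -lam j ∈ Set.Icc (-R) (0:ℝ) := by
    intro j
    constructor
    · exact neg_le_neg ((le_abs_self _).trans (hRl j))
    · simpa using hlam j
  -- the bad event sets
  set B1 : Fin d → Finset (Finset (Fin N)) := fun i => P.filter
    (fun T => s0 ≤ (∑ j ∈ T, lam j * V j i) - m * ((∑ j, lam j * V j i) / N)) with hB1def
  set B2 : Fin d → Finset (Finset (Fin N)) := fun i => P.filter
    (fun T => s0 ≤ (∑ j ∈ T, -(lam j * V j i)) - m * ((∑ j, -(lam j * V j i)) / N)) with hB2def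
  set B3 : Finset (Finset (Fin N)) := P.filter
    (fun T => s0 ≤ (∑ j ∈ T, lam j) - m * ((∑ j, lam j) / N)) with hB3def
  set B4 : Finset (Finset (Fin N)) := P.filter
    (fun T => s0 ≤ (∑ j ∈ T, -lam j) - m * ((∑ j, -lam j) / N)) with hB4def
  have hB1card : ∀ i, ((B1 i).card : ℝ) ≤ (N.choose m : ℝ) * e1 := fun i =>
    tail_bound_univ (fun j => lam j * V j i) (-R) R m hmN (hcmem i)
      (by linarith) hm1 s0 hs0
  have hB2card : ∀ i, ((B2 i).card : ℝ) ≤ (N.choose m : ℝ) * e1 := fun i =>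
    tail_bound_univ (fun j => -(lam j * V j i)) (-R) R m hmN (hcmem' i)
      (by linarith) hm1 s0 hs0
  have hB3card : ((B3).card : ℝ) ≤ (N.choose m : ℝ) * e2 :=
    tail_bound_univ lam 0 R m hmN hlmem hR hm1 s0 hs0
  have hB4card : ((B4).card : ℝ) ≤ (N.choose m : ℝ) * e2 := by
    have h := tail_bound_univ (fun j => -lam j) (-R) 0 m hmN hlmem'
      (by linarith) hm1 s0 hs0
    have hexp : ((0:ℝ) - -R) ^ 2 = (R - 0) ^ 2 := by ring
    rw [hexp] at h
    exact h
  set Bad : Finset (Finset (Fin N)) :=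
    ((Finset.univ : Finset (Fin d)).biUnion (fun i => B1 i ∪ B2 i)) ∪ (B3 ∪ B4) with hBaddef
  have hBadlt : (Bad.card : ℝ) < (P.card : ℝ) := by
    have h1 : (Bad.card : ℕ) ≤
        (∑ i : Fin d, ((B1 i).card + (B2 i).card)) + ((B3).card + (B4).card) := by
      calc Bad.card
          ≤ ((Finset.univ : Finset (Fin d)).biUnion (fun i => B1 i ∪ B2 i)).card
            + (B3 ∪ B4).card := Finset.card_union_le _ _
        _ ≤ (∑ i : Fin d, (B1 i ∪ B2 i).card) + (B3 ∪ B4).card := by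
            exact Nat.add_le_add_right Finset.card_biUnion_le _
        _ ≤ (∑ i : Fin d, ((B1 i).card + (B2 i).card)) + ((B3).card + (B4).card) := by
            apply Nat.add_le_add
            · exact Finset.sum_le_sum (fun i _ => Finset.card_union_le _ _)
            · exact Finset.card_union_le _ _
    have h2 : ((Bad.card : ℕ) : ℝ) ≤ (d:ℝ) * (2 * (N.choose m : ℝ) * e1)
        + 2 * (N.choose m : ℝ) * e2 := by
      calc ((Bad.card : ℕ) : ℝ)
          ≤ ((∑ i : Fin d, ((B1 i).card + (B2 i).card) : ℕ) : ℝ)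
            + (((B3).card + (B4).card : ℕ) : ℝ) := by exact_mod_cast h1
        _ ≤ (∑ i : Fin d, (2 * (N.choose m : ℝ) * e1)) + 2 * (N.choose m : ℝ) * e2 := by
            push_cast
            apply add_le_add
            · apply Finset.sum_le_sum
              intro i _
              have := hB1card i
              have := hB2card i
              linarith
            · linarith [hB3card, hB4card]
        _ = (d:ℝ) * (2 * (N.choose m : ℝ) * e1) + 2 * (N.choose m : ℝ) * e2 := by
            rw [Finset.sum_const, Finset.card_univ, Fintype.card_fin, nsmul_eq_mul]
    have h3 : (d:ℝ) * (2 * (N.choose m : ℝ) * e1) + 2 * (N.choose m : ℝ) * e2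
        < (N.choose m : ℝ) := by
      have e : (d:ℝ) * (2 * (N.choose m : ℝ) * e1) + 2 * (N.choose m : ℝ) * e2
          = (N.choose m : ℝ) * (2 * (d:ℝ) * e1 + 2 * e2) := by ring
      rw [e]
      calc (N.choose m : ℝ) * (2 * (d:ℝ) * e1 + 2 * e2)
          < (N.choose m : ℝ) * 1 := by
            apply mul_lt_mul_of_pos_left hsmall hCpos
        _ = (N.choose m : ℝ) := mul_one _
    rw [hPcard]
    linarith
  -- pick a good subset T
  have hnotsub : ¬ P ⊆ Bad := by
    intro hsub
    have := Finset.card_le_card hsub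
    have : (P.card : ℝ) ≤ (Bad.card : ℝ) := by exact_mod_cast this
    linarith
  obtain ⟨T, hTP, hTBad⟩ := Finset.not_subset.1 hnotsub
  have hTcard : T.card = m := (Finset.mem_powersetCard.1 hTP).2
  -- extract the deviation bounds
  have hT1 : ∀ i : Fin d,
      (∑ j ∈ T, lam j * V j i) - m * ((∑ j, lam j * V j i) / N) < s0 := by
    intro i
    by_contra hcon
    push_neg at hcon
    exact hTBad (Finset.mem_union_left _ (Finset.mem_biUnion.2
      ⟨i, Finset.mem_univ i, Finset.mem_union_left _ (Finset.mem_filter.2 ⟨hTP, hcon⟩)⟩))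
  have hT2 : ∀ i : Fin d,
      (∑ j ∈ T, -(lam j * V j i)) - m * ((∑ j, -(lam j * V j i)) / N) < s0 := by
    intro i
    by_contra hcon
    push_neg at hcon
    exact hTBad (Finset.mem_union_left _ (Finset.mem_biUnion.2
      ⟨i, Finset.mem_univ i, Finset.mem_union_right _ (Finset.mem_filter.2 ⟨hTP, hcon⟩)⟩))
  have hT3 : (∑ j ∈ T, lam j) - m * ((∑ j, lam j) / N) < s0 := by
    by_contra hcon
    push_neg at hcon
    exact hTBad (Finset.mem_union_right _
      (Finset.mem_union_left _ (Finset.mem_filter.2 ⟨hTP, hcon⟩)))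
  have hT4 : (∑ j ∈ T, -lam j) - m * ((∑ j, -lam j) / N) < s0 := by
    by_contra hcon
    push_neg at hcon
    exact hTBad (Finset.mem_union_right _
      (Finset.mem_union_right _ (Finset.mem_filter.2 ⟨hTP, hcon⟩)))
  -- construct the result
  have hNne : (N:ℝ) ≠ 0 := ne_of_gt hNpos
  have hmne : (m:ℝ) ≠ 0 := ne_of_gt hmpos
  have hNm : (0:ℝ) < (N:ℝ) / m := by positivity
  refine ⟨T, fun j => (N:ℝ) / m * lam j, hTcard, ?_, ?_, ?_⟩
  · intro j
    have := hlam j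
    positivity
  · -- the norm bound
    rw [pi_norm_le_iff_of_nonneg hε.le]
    intro i
    set Xi : ℝ := ∑ j, lam j * V j i with hXi
    set Si : ℝ := ∑ j ∈ T, lam j * V j i with hSi
    set D : ℝ := Si - m * (Xi / N) with hD
    have habs : |D| < s0 := by
      rw [abs_lt]
      constructor
      · have h2 := hT2 i
        rw [Finset.sum_neg_distrib, Finset.sum_neg_distrib] at h2
        have e : -Si - (m:ℝ) * (-Xi / N) = -D := by rw [hD]; ring
        rw [e] at h2
        linarith
      · exact hT1 i
    have hxival : x i = Xi := by
      rw [hx, hXi]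
      simp [Finset.sum_apply, Pi.smul_apply, smul_eq_mul]
    have hcoord : (x - ∑ j ∈ T, ((N:ℝ) / m * lam j) • V j) i = -( (N:ℝ)/m * D ) := by
      have h1 : (x - ∑ j ∈ T, ((N:ℝ) / m * lam j) • V j) i
          = x i - ∑ j ∈ T, ((N:ℝ) / m * lam j) * V j i := by
        simp [Finset.sum_apply, Pi.smul_apply, smul_eq_mul]
      have h2 : ∑ j ∈ T, ((N:ℝ) / m * lam j) * V j i = (N:ℝ)/m * Si := by
        rw [hSi, Finset.mul_sum]
        exact Finset.sum_congr rfl (fun j _ => by ring)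
      rw [h1, h2, hxival, hD]
      field_simp
      ring
    rw [hcoord, Real.norm_eq_abs, abs_neg, abs_mul, abs_of_pos hNm]
    calc (N:ℝ)/m * |D| ≤ (N:ℝ)/m * s0 := by
          apply mul_le_mul_of_nonneg_left habs.le hNm.le
      _ = ε := by rw [hs0def]; field_simp
  · -- the coefficient-sum bound
    set Sl : ℝ := ∑ j ∈ T, lam j with hSl
    set Dl : ℝ := Sl - m * (1 / N) with hDl
    have habs : |Dl| < s0 := by
      rw [abs_lt]
      constructor
      · have h2 := hT4
        rw [Finset.sum_neg_distrib, Finset.sum_neg_distrib, hsum] at h2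
        have e : -Sl - (m:ℝ) * (-(1:ℝ) / N) = -Dl := by rw [hDl]; ring
        rw [e] at h2
        linarith
      · have h1 := hT3
        rw [hsum] at h1
        rw [hDl]
        exact h1
    have hcoef : (∑ j ∈ T, (N:ℝ) / m * lam j) - 1 = (N:ℝ)/m * Dl := by
      have h2 : ∑ j ∈ T, ((N:ℝ) / m * lam j) = (N:ℝ)/m * Sl := by
        rw [hSl, Finset.mul_sum]
      rw [h2, hDl]
      field_simp
    rw [hcoef, abs_mul, abs_of_pos hNm]
    calc (N:ℝ)/m * |Dl| ≤ (N:ℝ)/m * s0 := by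
          apply mul_le_mul_of_nonneg_left habs.le hNm.le
      _ = ε := by rw [hs0def]; field_simp


set_option maxHeartbeats 2000000 in
/-- Approximate Carathéodory with high sampling ratio in `ℓ_∞`: if
`x = ∑_{j=1}^N λⱼ Vⱼ` is a convex combination in `ℝᵈ` (with the sup norm `‖·‖`),
`R = max(maxⱼ ‖λⱼ Vⱼ‖_∞, maxⱼ |λⱼ|)` and `ε > 0`, then there is a subset `J` of size
`1 + N·(2 log(4d)(√N R/ε)²)/(1 + 2 log(4d)(√N R/ε)²)` and nonnegative coefficients
`μⱼ`, `j ∈ J`, with `‖x - ∑_{j∈J} μⱼ Vⱼ‖_∞ ≤ ε` and `|∑_{j∈J} μⱼ - 1| ≤ ε`. -/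
theorem approx_caratheodory_high_sampling_ratio (d N : ℕ)
    (V : Fin N → (Fin d → ℝ)) (lam : Fin N → ℝ)
    (hlam : ∀ j, 0 ≤ lam j) (hsum : ∑ j, lam j = 1)
    (x : Fin d → ℝ) (hx : x = ∑ j, lam j • V j)
    (ε : ℝ) (hε : 0 < ε)
    (R : ℝ) (hRv : ∀ j, ‖lam j • V j‖ ≤ R) (hRl : ∀ j, |lam j| ≤ R) :
    ∃ (J : Finset (Fin N)) (μ : Fin N → ℝ),
      (J.card : ℝ) ≤ 1 + N * (2 * log (4 * d) * (Real.sqrt N * R / ε) ^ 2) /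
          (1 + 2 * log (4 * d) * (Real.sqrt N * R / ε) ^ 2) ∧
      (∀ j, 0 ≤ μ j) ∧
      ‖x - ∑ j ∈ J, μ j • V j‖ ≤ ε ∧
      |(∑ j ∈ J, μ j) - 1| ≤ ε := by
  -- N ≥ 1
  rcases Nat.eq_zero_or_pos N with hN0 | hNpos
  · exfalso
    subst hN0
    simp at hsum
  -- basic positivity
  have hNR : (1:ℝ) ≤ N * R := by
    calc (1:ℝ) = ∑ j, lam j := hsum.symm
      _ ≤ ∑ j : Fin N, R := Finset.sum_le_sum (fun j _ => (le_abs_self _).trans (hRl j))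
      _ = N * R := by rw [Finset.sum_const, Finset.card_univ, Fintype.card_fin, nsmul_eq_mul]
  have hNr : (1:ℝ) ≤ (N:ℝ) := by exact_mod_cast hNpos
  have hR : 0 < R := by nlinarith
  -- dimension zero case
  rcases Nat.eq_zero_or_pos d with hd0 | hdpos
  · subst hd0
    refine ⟨{⟨0, hNpos⟩}, fun _ => 1, ?_, fun j => zero_le_one, ?_, ?_⟩
    · simp [Real.log_zero]
    · have : x - ∑ j ∈ {(⟨0, hNpos⟩ : Fin N)}, (1:ℝ) • V j = 0 := Subsingleton.elim _ _
      rw [this, norm_zero]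
      exact hε.le
    · simpa using hε.le
  -- now d ≥ 1
  have hdr : (1:ℝ) ≤ (d:ℝ) := by exact_mod_cast hdpos
  set L : ℝ := log (4 * d) with hL
  have hLlog4 : log 4 ≤ L := by
    rw [hL]
    apply Real.log_le_log (by norm_num)
    nlinarith
  have hlog2 : (0.6931471803 : ℝ) < log 2 := Real.log_two_gt_d9
  have hlog4 : log 4 = 2 * log 2 := by
    rw [show (4:ℝ) = 2^2 by norm_num, Real.log_pow]
    push_cast; ring
  have hL1 : (1.386:ℝ) < L := by
    rw [hlog4] at hLlog4; linarith
  clear_value L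
  have hsqN : (Real.sqrt N) ^ 2 = (N:ℝ) := Real.sq_sqrt (by positivity)
  set t : ℝ := 2 * L * (Real.sqrt N * R / ε) ^ 2 with ht
  have htval : t = 2 * L * ((N:ℝ) * R ^ 2 / ε ^ 2) := by
    rw [ht, div_pow, mul_pow, hsqN]
  have htpos : 0 < t := by
    rw [htval]
    have : 0 < L := by linarith
    positivity
  have h1t : (0:ℝ) < 1 + t := by linarith
  clear_value t
  rcases le_or_gt ((N:ℝ) - 1) t with hcaseA | hcaseB
  · -- Case A : take everything
    refine ⟨Finset.univ, lam, ?_, hlam, ?_, ?_⟩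
    · rw [Finset.card_univ, Fintype.card_fin]
      have key : ((N:ℝ) - 1) * (1 + t) ≤ (N:ℝ) * t := by nlinarith
      have : (N:ℝ) - 1 ≤ (N:ℝ) * t / (1 + t) := (le_div_iff₀ h1t).2 key
      linarith
    · rw [hx, sub_self, norm_zero]; exact hε.le
    · rw [hsum]; simpa using hε.le
  · -- Case B : t < N - 1
    have hN2 : (2:ℝ) ≤ (N:ℝ) := by
      have h1 : (1:ℝ) < (N:ℝ) := by linarith
      have h2 : 1 < N := by exact_mod_cast h1
      exact_mod_cast h2
    set m : ℕ := 1 + ⌊(N:ℝ) * t / (1 + t)⌋₊ with hm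
    have hargnn : 0 ≤ (N:ℝ) * t / (1 + t) := by positivity
    have hfl1 : ((m:ℝ)) - 1 ≤ (N:ℝ) * t / (1 + t) := by
      rw [hm]
      push_cast
      have := Nat.floor_le hargnn
      linarith
    have hfl2 : (N:ℝ) * t / (1 + t) < (m:ℝ) := by
      rw [hm]
      push_cast
      have := Nat.lt_floor_add_one ((N:ℝ) * t / (1 + t))
      linarith
    have hm1 : 1 ≤ m := by rw [hm]; omega
    clear_value m
    clear hm
    have hcardle : (m:ℝ) ≤ 1 + (N:ℝ) * t / (1 + t) := by linarith
    have hmN : m < N := by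
      have harg : (N:ℝ) * t / (1 + t) < (N:ℝ) - 1 := by
        rw [div_lt_iff₀ h1t]
        nlinarith
      have : (m:ℝ) < (N:ℝ) := by linarith
      exact_mod_cast this
    set q : ℕ := N - m with hq
    have hq1 : 1 ≤ q := by omega
    have hqcast : (q:ℝ) = (N:ℝ) - (m:ℝ) := by
      rw [hq, Nat.cast_sub hmN.le]
    clear_value q
    have hqpos : (0:ℝ) < (q:ℝ) := by
      have : (1:ℝ) ≤ (q:ℝ) := by exact_mod_cast hq1
      linarith
    have hmpos : (0:ℝ) < (m:ℝ) := by
      have : (1:ℝ) ≤ (m:ℝ) := by exact_mod_cast hm1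
      linarith
    have htq : t * (q:ℝ) < (m:ℝ) := by
      rw [hqcast]
      have h2 : (N:ℝ) * t < (m:ℝ) * (1 + t) := (div_lt_iff₀ h1t).1 hfl2
      nlinarith [htpos, hmpos]
    have hLpos : (0:ℝ) < L := by linarith
    rcases le_or_gt ((q:ℝ) * (m:ℝ)) (2 * L * N) with hB1 | hB2
    · -- Case B1 : drop q arbitrary elements, keep weights
      have hqRε : (q:ℝ) * R < ε := by
        have h1 : (q:ℝ)^2 * t < (q:ℝ) * (m:ℝ) :=
          calc (q:ℝ)^2 * t = (q:ℝ) * (t * (q:ℝ)) := by ring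
            _ < (q:ℝ) * (m:ℝ) := mul_lt_mul_of_pos_left htq hqpos
        have h2 : (q:ℝ)^2 * t < 2 * L * N := lt_of_lt_of_le h1 hB1
        rw [htval] at h2
        have h3 : ((q:ℝ) * R)^2 < ε^2 := by
          have h4 := mul_lt_mul_of_pos_right h2 (show (0:ℝ) < ε^2 by positivity)
          have e1 : (q:ℝ)^2 * (2 * L * ((N:ℝ) * R^2 / ε^2)) * ε^2
              = 2 * L * (N:ℝ) * ((q:ℝ) * R)^2 := by field_simp
          rw [e1] at h4
          have hpos : (0:ℝ) < 2 * L * (N:ℝ) := by nlinarith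
          nlinarith [h4]
        exact lt_of_pow_lt_pow_left₀ 2 hε.le h3
      obtain ⟨J, hJsub, hJcard⟩ := Finset.exists_subset_card_eq
        (show m ≤ (Finset.univ : Finset (Fin N)).card by
          rw [Finset.card_univ, Fintype.card_fin]; exact hmN.le)
      refine ⟨J, lam, ?_, hlam, ?_, ?_⟩
      · rw [hJcard]; exact hcardle
      · -- norm bound
        rw [pi_norm_le_iff_of_nonneg hε.le]
        intro i
        have hdiff : (x - ∑ j ∈ J, lam j • V j) i = ∑ j ∈ Finset.univ \ J, lam j * V j i := by
          rw [hx]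
          simp only [Pi.sub_apply, Finset.sum_apply, Pi.smul_apply, smul_eq_mul]
          rw [← Finset.sum_sdiff hJsub]
          ring
        rw [hdiff, Real.norm_eq_abs]
        have hcardsd : (Finset.univ \ J).card = q := by
          rw [Finset.card_sdiff_of_subset hJsub, Finset.card_univ, Fintype.card_fin, hJcard]
          omega
        calc |∑ j ∈ Finset.univ \ J, lam j * V j i|
            ≤ ∑ j ∈ Finset.univ \ J, |lam j * V j i| := Finset.abs_sum_le_sum_abs _ _
          _ ≤ ∑ j ∈ Finset.univ \ J, R := by
              apply Finset.sum_le_sum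
              intro j _
              have h1 := norm_le_pi_norm (lam j • V j) i
              simp only [Pi.smul_apply, smul_eq_mul, Real.norm_eq_abs] at h1
              exact h1.trans (hRv j)
          _ = q * R := by rw [Finset.sum_const, hcardsd, nsmul_eq_mul]
          _ ≤ ε := hqRε.le
      · -- sum bound
        have hdiff : (∑ j ∈ J, lam j) - 1 = -(∑ j ∈ Finset.univ \ J, lam j) := by
          rw [← hsum, ← Finset.sum_sdiff hJsub]
          ring
        rw [hdiff, abs_neg]
        have hcardsd : (Finset.univ \ J).card = q := by
          rw [Finset.card_sdiff_of_subset hJsub, Finset.card_univ, Fintype.card_fin, hJcard]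
          omega
        rw [abs_of_nonneg (Finset.sum_nonneg (fun j _ => hlam j))]
        calc ∑ j ∈ Finset.univ \ J, lam j
            ≤ ∑ j ∈ Finset.univ \ J, R := Finset.sum_le_sum
              (fun j _ => (le_abs_self _).trans (hRl j))
          _ = q * R := by rw [Finset.sum_const, hcardsd, nsmul_eq_mul]
          _ ≤ ε := hqRε.le
    · -- Case B2 : probabilistic selection
      have hmleN : (m:ℝ) ≤ (N:ℝ) := by exact_mod_cast hmN.le
      have hNpos : (0:ℝ) < (N:ℝ) := by linarith
      have hq2L : 2 * L < (q:ℝ) := by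
        nlinarith [mul_le_mul_of_nonneg_left hmleN hqpos.le]
      have hN8L : 8 * L < (N:ℝ) := by
        have h1 : (q:ℝ) * (m:ℝ) ≤ (N:ℝ)^2/4 := by
          rw [hqcast]
          nlinarith [sq_nonneg ((N:ℝ) - 2*(m:ℝ))]
        nlinarith
      set Sg : ℝ := ∑ j ∈ Finset.range m, (((N : ℝ) - 1 - j)⁻¹) ^ 2 with hSgdef
      have hSgpos : 0 < Sg := by
        rw [hSgdef]
        apply Finset.sum_pos
        · intro j hj
          have hjm : j < m := Finset.mem_range.1 hj
          have ha1 : (j:ℝ) + 1 ≤ (m:ℝ) := by exact_mod_cast hjm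
          have ha2 : (m:ℝ) + 1 ≤ (N:ℝ) := by exact_mod_cast hmN
          have : (0:ℝ) < (N:ℝ) - 1 - j := by linarith
          positivity
        · exact ⟨0, Finset.mem_range.2 hm1⟩
      have hW : (0:ℝ) < ((q:ℝ) - 1/2) * ((N:ℝ) - 1/2) := by nlinarith
      have hSgle : Sg ≤ (m:ℝ) / (((q:ℝ) - 1/2) * ((N:ℝ) - 1/2)) := by
        have h := sig_le N m hm1 hmN
        rw [hSgdef]
        calc ∑ j ∈ Finset.range m, (((N : ℝ) - 1 - j)⁻¹) ^ 2
            ≤ (m:ℝ) / ((((N : ℝ) - m) - 1/2) * ((N : ℝ) - 1/2)) := h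
          _ = (m:ℝ) / (((q:ℝ) - 1/2) * ((N:ℝ) - 1/2)) := by rw [hqcast]
      have hSgW : Sg * (((q:ℝ) - 1/2) * ((N:ℝ) - 1/2)) ≤ (m:ℝ) :=
        (le_div_iff₀ hW).1 hSgle
      have hL516 : (0:ℝ) < L - 5/16 := by linarith
      have hε2q : 2 * L * (N:ℝ) * R^2 * (q:ℝ) < (m:ℝ) * ε^2 := by
        have h0 := mul_lt_mul_of_pos_right htq (show (0:ℝ) < ε^2 by positivity)
        rw [htval] at h0
        have hεne : (ε ^ 2 : ℝ) ≠ 0 := by positivity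
        have e : 2 * L * ((N:ℝ) * R ^ 2 / ε ^ 2) * (q:ℝ) * ε ^ 2
            = 2 * L * (N:ℝ) * R^2 * (q:ℝ) := by
          calc 2 * L * ((N:ℝ) * R ^ 2 / ε ^ 2) * (q:ℝ) * ε ^ 2
              = 2 * L * ((N:ℝ) * R ^ 2) * (q:ℝ) * (ε ^ 2 / ε ^ 2) := by ring
            _ = 2 * L * (N:ℝ) * R^2 * (q:ℝ) := by rw [div_self hεne]; ring
        rw [e] at h0
        exact h0
      have hC : (L - 5/16) * ((N:ℝ) * (q:ℝ)) < L * (((q:ℝ) - 1/2) * ((N:ℝ) - 1/2)) := by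
        nlinarith [mul_pos hNpos (sub_pos.2 hq2L), mul_pos hqpos (sub_pos.2 hN8L)]
      have hkey : (L - 5/16) * (2 * (N:ℝ)^2 * (q:ℝ)^2 * R^2 * Sg) < (m:ℝ)^2 * ε^2 := by
        set W : ℝ := ((q:ℝ) - 1/2) * ((N:ℝ) - 1/2) with hWdef
        have step1 : (L - 5/16) * (2 * (N:ℝ)^2 * (q:ℝ)^2 * R^2 * Sg) * W
            ≤ (L - 5/16) * (2 * (N:ℝ)^2 * (q:ℝ)^2 * R^2) * (m:ℝ) := by
          calc (L - 5/16) * (2 * (N:ℝ)^2 * (q:ℝ)^2 * R^2 * Sg) * W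
              = (L - 5/16) * (2 * (N:ℝ)^2 * (q:ℝ)^2 * R^2) * (Sg * W) := by ring
            _ ≤ (L - 5/16) * (2 * (N:ℝ)^2 * (q:ℝ)^2 * R^2) * (m:ℝ) := by
                apply mul_le_mul_of_nonneg_left hSgW
                positivity
        have step2 : (L - 5/16) * (2 * (N:ℝ)^2 * (q:ℝ)^2 * R^2) * (m:ℝ)
            < L * W * (2 * (N:ℝ) * (q:ℝ) * R^2 * (m:ℝ)) := by
          have h := mul_lt_mul_of_pos_right hC
            (show (0:ℝ) < 2 * (N:ℝ) * (q:ℝ) * R^2 * (m:ℝ) by positivity)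
          calc (L - 5/16) * (2 * (N:ℝ)^2 * (q:ℝ)^2 * R^2) * (m:ℝ)
              = (L - 5/16) * ((N:ℝ) * (q:ℝ)) * (2 * (N:ℝ) * (q:ℝ) * R^2 * (m:ℝ)) := by ring
            _ < L * W * (2 * (N:ℝ) * (q:ℝ) * R^2 * (m:ℝ)) := h
        have step3 : L * W * (2 * (N:ℝ) * (q:ℝ) * R^2 * (m:ℝ)) < (m:ℝ)^2 * ε^2 * W := by
          have h := mul_lt_mul_of_pos_right hε2q
            (show (0:ℝ) < (m:ℝ) * W by positivity)
          calc L * W * (2 * (N:ℝ) * (q:ℝ) * R^2 * (m:ℝ))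
              = 2 * L * (N:ℝ) * R^2 * (q:ℝ) * ((m:ℝ) * W) := by ring
            _ < (m:ℝ) * ε^2 * ((m:ℝ) * W) := h
            _ = (m:ℝ)^2 * ε^2 * W := by ring
        have hfin := lt_of_le_of_lt step1 (lt_trans step2 step3)
        exact lt_of_mul_lt_mul_right hfin hW.le
      obtain ⟨J, μ, hJcard, hμ, hnorm, hcoef⟩ :=
        caseB2 d N m q V lam hlam hsum x hx ε R L hε hR hRv hRl hdr hL hL1
          hm1 hmN hqcast hq2L hN8L hkey
      refine ⟨J, μ, ?_, hμ, hnorm, hcoef⟩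
      rw [hJcard]
      exact hcardle
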